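/- Let P be a real polynomial of degree n ≥ 2 such that for every j ∈ {1, ..., n-1}, the Wronskian (P^{(n-j-1)})'(x) · P^{(n-j)}(x) - (P^{(n-j)})'(x) · P^{(n-j-1)}(x) > 0 for all real x. Then P has n distinct real roots. -/

import Mathlib

open Polynomial Filter

private lemma sign_trans {a b c : ℝ} (h1 : a * b < 0) (h2 : 0 < b * c) : a * c < 0 := by
  rcases lt_trichotomy b 0 with hb | hb | hb
  · have ha : 0 < a := by nlinarith
    have hc : c < 0 := by nlinarith
    exact mul_neg_of_pos_of_neg ha hc
  · simp [hb] at h1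
  · have ha : a < 0 := by nlinarith
    have hc : 0 < c := by nlinarith
    exact mul_neg_of_neg_of_pos ha hc

private lemma card_filter_lt_fin {j m : ℕ} (hm : m ≤ j) :
    (Finset.univ.filter (fun k : Fin j => (k : ℕ) < m)).card = m := by
  classical
  have h : Finset.univ.filter (fun k : Fin j => (k : ℕ) < m)
      = Finset.univ.map (Fin.castLEEmb hm) := by
    ext k
    simp only [Finset.mem_filter, Finset.mem_univ, true_and, Finset.mem_map]
    constructor
    · intro hk; exact ⟨⟨k.val, hk⟩, rfl⟩
    · rintro ⟨a, rfl⟩; simpa using a.isLt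
  rw [h, Finset.card_map, Finset.card_univ, Fintype.card_fin]

private lemma prod_sub_eq {ι : Type*} (s : Finset ι) (f g : ι → ℝ) :
    ∏ k ∈ s, (f k - g k) = (-1 : ℝ) ^ s.card * ∏ k ∈ s, (g k - f k) := by
  rw [← Finset.prod_const (-1 : ℝ), ← Finset.prod_mul_distrib]
  exact Finset.prod_congr rfl (fun k _ => by ring)

private lemma prod_sign {j m : ℕ} (hm : m ≤ j) (r : Fin j → ℝ) (x : ℝ)
    (h1 : ∀ k : Fin j, (k : ℕ) < m → x < r k)
    (h2 : ∀ k : Fin j, m ≤ (k : ℕ) → r k < x) :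
    0 < (∏ k, (x - r k)) * (-1 : ℝ) ^ m := by
  classical
  rw [← Finset.prod_filter_mul_prod_filter_not Finset.univ (fun k : Fin j => (k : ℕ) < m)]
  rw [prod_sub_eq (Finset.univ.filter (fun k : Fin j => (k : ℕ) < m)) (fun _ => x) r,
    card_filter_lt_fin hm]
  have hApos : 0 < ∏ k ∈ Finset.univ.filter (fun k : Fin j => (k : ℕ) < m), (r k - x) := by
    apply Finset.prod_pos
    intro k hk
    have := h1 k (by simpa using hk)
    linarith
  have hBpos : 0 < ∏ k ∈ Finset.univ.filter (fun k : Fin j => ¬ (k : ℕ) < m), (x - r k) := by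
    apply Finset.prod_pos
    intro k hk
    have := h2 k (by simpa using (Finset.mem_filter.mp hk).2)
    linarith
  have hsq : ((-1 : ℝ) ^ m) * ((-1 : ℝ) ^ m) = 1 := by
    rw [← pow_add]
    exact Even.neg_one_pow ⟨m, rfl⟩
  have hring : ((-1 : ℝ) ^ m * ∏ k ∈ Finset.univ.filter (fun k : Fin j => (k : ℕ) < m), (r k - x))
      * (∏ k ∈ Finset.univ.filter (fun k : Fin j => ¬ (k : ℕ) < m), (x - r k)) * (-1 : ℝ) ^ m
      = ((∏ k ∈ Finset.univ.filter (fun k : Fin j => (k : ℕ) < m), (r k - x))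
        * ∏ k ∈ Finset.univ.filter (fun k : Fin j => ¬ (k : ℕ) < m), (x - r k))
        * (((-1 : ℝ) ^ m) * ((-1 : ℝ) ^ m)) := by ring
  rw [hring, hsq, mul_one]
  exact mul_pos hApos hBpos

private lemma exists_root_between (Q : ℝ[X]) {a b : ℝ} (hab : a < b)
    (h : Q.eval a * Q.eval b < 0) : ∃ x, a < x ∧ x < b ∧ Q.eval x = 0 := by
  have hc : ContinuousOn (fun x => Q.eval x) (Set.Icc a b) :=
    (Polynomial.continuous Q).continuousOn
  rcases lt_trichotomy (Q.eval a) 0 with ha | ha | ha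
  · have hb : 0 < Q.eval b := by nlinarith
    have := intermediate_value_Ioo hab.le hc (Set.mem_Ioo.mpr ⟨ha, hb⟩)
    obtain ⟨x, hx, hfx⟩ := this
    exact ⟨x, hx.1, hx.2, hfx⟩
  · simp [ha] at h
  · have hb : Q.eval b < 0 := by nlinarith
    have := intermediate_value_Ioo' hab.le hc (Set.mem_Ioo.mpr ⟨hb, ha⟩)
    obtain ⟨x, hx, hfx⟩ := this
    exact ⟨x, hx.1, hx.2, hfx⟩

private lemma eval_pos_atTop (Q : ℝ[X]) (h : 0 < Q.natDegree) :
    ∃ a : ℝ, ∀ x, a ≤ x → 0 < Q.eval x * Q.leadingCoeff := by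
  have hd : 0 < Q.degree := natDegree_pos_iff_degree_pos.mp h
  have hQ0 : Q ≠ 0 := fun h0 => by simp [h0] at h
  have hL : Q.leadingCoeff ≠ 0 := leadingCoeff_ne_zero.mpr hQ0
  rcases hL.lt_or_gt with hL | hL
  · have ht := Polynomial.tendsto_atBot_of_leadingCoeff_nonpos Q hd hL.le
    obtain ⟨a, ha⟩ := eventually_atTop.mp (ht.eventually_lt_atBot 0)
    exact ⟨a, fun x hx => mul_pos_of_neg_of_neg (ha x hx) hL⟩
  · have ht := Polynomial.tendsto_atTop_of_leadingCoeff_nonneg Q hd hL.le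
    obtain ⟨a, ha⟩ := eventually_atTop.mp (ht.eventually_gt_atTop 0)
    exact ⟨a, fun x hx => mul_pos (ha x hx) hL⟩

private lemma eval_pos_atBot (Q : ℝ[X]) (h : 0 < Q.natDegree) :
    ∃ a : ℝ, ∀ x, x ≤ a → 0 < Q.eval x * (Q.leadingCoeff * (-1 : ℝ) ^ Q.natDegree) := by
  have hX : ((-X : ℝ[X])).natDegree = 1 := by simp
  set R := Q.comp (-X) with hR
  have hRdeg : R.natDegree = Q.natDegree := by
    rw [hR, natDegree_comp, hX, mul_one]
  have hRL : R.leadingCoeff = Q.leadingCoeff * (-1 : ℝ) ^ Q.natDegree := by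
    rw [hR, leadingCoeff_comp (by rw [hX]; norm_num)]
    simp
  obtain ⟨a, ha⟩ := eval_pos_atTop R (hRdeg ▸ h)
  refine ⟨-a, fun x hx => ?_⟩
  have := ha (-x) (by linarith)
  rw [hR, eval_comp] at this
  simp only [eval_neg, eval_X, neg_neg] at this
  rw [hRL] at this
  exact this

private def Good (Q : ℝ[X]) (d : ℕ) : Prop :=
  ∃ r : Fin d → ℝ, StrictAnti r ∧ Q.roots = (↑(List.ofFn r) : Multiset ℝ) ∧
    ∀ i : Fin d, 0 < (derivative Q).eval (r i) * Q.leadingCoeff * (-1 : ℝ) ^ (i : ℕ)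

private lemma roots_of_points (Q : ℝ[X]) {d : ℕ} (hQ : Q ≠ 0) (hdeg : Q.natDegree = d)
    (s : Fin d → ℝ) (hs : StrictAnti s) (h0 : ∀ i, Q.eval (s i) = 0) :
    Q.roots = (↑(List.ofFn s) : Multiset ℝ) := by
  have hnodup : (↑(List.ofFn s) : Multiset ℝ).Nodup := by
    rw [Multiset.coe_nodup]
    exact List.nodup_ofFn.mpr hs.injective
  have hle : (↑(List.ofFn s) : Multiset ℝ) ≤ Q.roots := by
    rw [Multiset.le_iff_count]
    intro a
    by_cases ha : a ∈ (↑(List.ofFn s) : Multiset ℝ)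
    · have h1 : Multiset.count a (↑(List.ofFn s) : Multiset ℝ) ≤ 1 :=
        Multiset.nodup_iff_count_le_one.mp hnodup a
      have h2 : 1 ≤ Multiset.count a Q.roots := by
        rw [Multiset.one_le_count_iff_mem, mem_roots hQ]
        obtain ⟨i, rfl⟩ := List.mem_ofFn.mp ha
        exact h0 i
      omega
    · rw [Multiset.count_eq_zero_of_notMem ha]
      omega
  have hcard : Multiset.card Q.roots ≤ Multiset.card (↑(List.ofFn s) : Multiset ℝ) := by
    rw [Multiset.coe_card, List.length_ofFn]
    exact hdeg ▸ Q.card_roots'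
  exact (Multiset.eq_of_le_of_card_le hle hcard).symm

private lemma good_base (Q : ℝ[X]) (hdeg : Q.natDegree = 1) : Good Q 1 := by
  obtain ⟨a, ha, b, rfl⟩ := natDegree_eq_one.mp hdeg
  have hanti : StrictAnti (fun _ : Fin 1 => -(b / a)) := by
    intro i k h
    simp [Subsingleton.elim i k] at h
  refine ⟨fun _ => -(b / a), hanti, ?_, ?_⟩
  · apply roots_of_points _ (fun h0 => by simp [h0] at hdeg) hdeg
    · exact hanti
    · intro i
      simp only [eval_add, eval_mul, eval_C, eval_X]
      field_simp
      ring
  · intro i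
    have hd : derivative (C a * X + C b) = C a := by simp
    have hlc : (C a * X + C b).leadingCoeff = a := by
      rw [leadingCoeff, hdeg]
      simp [coeff_C]
    rw [hd, hlc]
    simp only [eval_C]
    have : (i : ℕ) = 0 := by omega
    rw [this, pow_zero, mul_one]
    exact mul_self_pos.mpr ha

private lemma good_step (Q : ℝ[X]) (j : ℕ) (hj : 1 ≤ j) (hdeg : Q.natDegree = j + 1)
    (hW : ∀ x : ℝ, (derivative Q).eval x * (derivative Q).eval x -
        (derivative (derivative Q)).eval x * Q.eval x > 0)
    (hG : Good (derivative Q) j) : Good Q (j + 1) := by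
  obtain ⟨r, hr, hroots, hder⟩ := hG
  have hQ0 : Q ≠ 0 := fun h0 => by rw [h0] at hdeg; simp at hdeg
  have hL : Q.leadingCoeff ≠ 0 := leadingCoeff_ne_zero.mpr hQ0
  have hdpos : 0 < Q.natDegree := by omega
  have hd' : (derivative Q).natDegree = j := by
    have h := degree_derivative_eq Q hdpos
    rw [hdeg] at h
    have h2 : (derivative Q).degree = (j : ℕ) := by simpa using h
    exact natDegree_eq_of_degree_eq_some h2
  have hQ'0 : derivative Q ≠ 0 := fun h0 => by rw [h0] at hd'; simp at hd'; omega

  have hL' : (derivative Q).leadingCoeff = Q.leadingCoeff * (j + 1) := by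
    rw [leadingCoeff, leadingCoeff, hd', hdeg, coeff_derivative]
  have hLL' : 0 < Q.leadingCoeff * (derivative Q).leadingCoeff := by
    rw [hL']
    have h1 : (0:ℝ) < (j:ℝ) + 1 := by positivity
    nlinarith [mul_self_pos.mpr hL]
  -- factorization of the derivative
  have hcards : Multiset.card (derivative Q).roots = (derivative Q).natDegree := by
    rw [hroots, hd', Multiset.coe_card, List.length_ofFn]
  have hfac0 := C_leadingCoeff_mul_prod_multiset_X_sub_C hcards
  have hfac : ∀ x : ℝ, (derivative Q).eval x
      = (derivative Q).leadingCoeff * ∏ k, (x - r k) := by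
    intro x
    conv_lhs => rw [← hfac0]
    rw [hroots, eval_mul, eval_C]
    congr 1
    rw [Multiset.map_coe, Multiset.prod_coe, eval_list_prod, List.map_map, List.map_ofFn]
    rw [List.prod_ofFn]
    apply Finset.prod_congr rfl
    intro k _
    simp [Function.comp]
  have hroot' : ∀ i : Fin j, (derivative Q).eval (r i) = 0 := by
    intro i
    have hmem : r i ∈ (derivative Q).roots := by
      rw [hroots, Multiset.mem_coe]
      exact List.mem_ofFn.mpr ⟨i, rfl⟩
    exact (mem_roots hQ'0).mp hmem
  -- sign of Q at the roots of Q'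
  have hQsign : ∀ i : Fin j,
      Q.eval (r i) * (Q.leadingCoeff * (-1 : ℝ) ^ (i : ℕ)) < 0 := by
    intro i
    have h1 := hW (r i)
    rw [hroot' i] at h1
    have h2 : Q.eval (r i) * (derivative (derivative Q)).eval (r i) < 0 := by nlinarith [h1]
    have h3 := hder i
    have h3' : 0 < (derivative (derivative Q)).eval (r i)
        * ((derivative Q).leadingCoeff * (-1 : ℝ) ^ (i : ℕ)) := by
      rw [← mul_assoc]; exact h3
    have h4 := sign_trans h2 h3'
    rw [hL'] at h4
    have hc : (0:ℝ) < (j:ℝ) + 1 := by positivity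
    nlinarith [h4, hc]
  -- existence of roots of Q in each gap
  have hexists : ∀ i : ℕ, i ≤ j → ∃ x : ℝ,
      (∀ k : Fin j, (k : ℕ) < i → x < r k) ∧
      (∀ k : Fin j, i ≤ (k : ℕ) → r k < x) ∧ Q.eval x = 0 := by
    intro i hi
    rcases Nat.eq_zero_or_pos i with rfl | hi0
    · -- rightmost root
      obtain ⟨a, ha⟩ := eval_pos_atTop Q hdpos
      have hj0 : 0 < j := hj
      set i0 : Fin j := ⟨0, hj0⟩ with hi0def
      set b := max a (r i0 + 1) with hbdef
      have hrb : r i0 < b := lt_of_lt_of_le (by linarith) (le_max_right _ _)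
      have ht : 0 < Q.eval b * Q.leadingCoeff := ha b (le_max_left _ _)
      have hs0 : Q.eval (r i0) * Q.leadingCoeff < 0 := by
        have h := hQsign i0
        have hv : ((i0 : Fin j) : ℕ) = 0 := rfl
        rw [hv, pow_zero, mul_one] at h
        exact h
      have ht' : 0 < Q.leadingCoeff * Q.eval b := by rw [mul_comm]; exact ht
      have hprod : Q.eval (r i0) * Q.eval b < 0 := sign_trans hs0 ht'
      obtain ⟨x, hx1, hx2, hx3⟩ := exists_root_between Q hrb hprod
      refine ⟨x, fun k hk => absurd hk (by omega), fun k _ => ?_, hx3⟩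
      have hk0 : r k ≤ r i0 := hr.antitone (Fin.le_def.mpr (show 0 ≤ (k:ℕ) from Nat.zero_le _))
      linarith
    rcases eq_or_lt_of_le hi with heq | hij
    · -- leftmost root
      obtain ⟨a, ha⟩ := eval_pos_atBot Q hdpos
      set iT : Fin j := ⟨i - 1, by omega⟩ with hiTdef
      set b := min a (r iT - 1) with hbdef
      have hrb : b < r iT := lt_of_le_of_lt (min_le_right _ _) (by linarith)
      have ht : 0 < Q.eval b * (Q.leadingCoeff * (-1 : ℝ) ^ (i + 1)) := by
        have h := ha b (min_le_left _ _)
        rw [hdeg, ← heq] at h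
        rwa [← mul_assoc, mul_assoc] at h
      have hpow : (-1 : ℝ) ^ (i + 1) = (-1 : ℝ) ^ (i - 1) := by
        have hjj : i + 1 = (i - 1) + 2 := by omega
        rw [hjj, pow_add]
        norm_num
      have hsT : Q.eval (r iT) * (Q.leadingCoeff * (-1 : ℝ) ^ (i - 1)) < 0 := by
        have h := hQsign iT
        have hv : ((iT : Fin j) : ℕ) = i - 1 := rfl
        rwa [hv] at h
      have ht' : 0 < (Q.leadingCoeff * (-1 : ℝ) ^ (i - 1)) * Q.eval b := by
        rw [mul_comm, ← hpow]; exact ht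
      have hprod := sign_trans hsT ht'
      have hprod' : Q.eval b * Q.eval (r iT) < 0 := by rw [mul_comm]; exact hprod
      obtain ⟨x, hx1, hx2, hx3⟩ := exists_root_between Q hrb hprod'
      refine ⟨x, fun k _ => ?_, fun k hk => absurd hk (by have := k.isLt; omega), hx3⟩
      have hk0 : r iT ≤ r k := hr.antitone (Fin.le_def.mpr (show (k:ℕ) ≤ i - 1 by have := k.isLt; omega))
      linarith
    · -- interior root
      set k1 : Fin j := ⟨i - 1, by omega⟩ with hk1def
      set k2 : Fin j := ⟨i, hij⟩ with hk2def
      have hlt : r k2 < r k1 := hr (Fin.lt_def.mpr (show i - 1 < i by omega))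
      have hs2 : Q.eval (r k2) * (Q.leadingCoeff * (-1 : ℝ) ^ i) < 0 := by
        have h := hQsign k2
        have hv : ((k2 : Fin j) : ℕ) = i := rfl
        rwa [hv] at h
      have hs1 : Q.eval (r k1) * (Q.leadingCoeff * (-1 : ℝ) ^ (i - 1)) < 0 := by
        have h := hQsign k1
        have hv : ((k1 : Fin j) : ℕ) = i - 1 := rfl
        rwa [hv] at h
      have hpow : (-1 : ℝ) ^ i = -(-1 : ℝ) ^ (i - 1) := by
        have hii : i = (i - 1) + 1 := by omega
        conv_lhs => rw [hii]
        rw [pow_succ]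
        ring
      have hpos2 : 0 < (Q.leadingCoeff * (-1 : ℝ) ^ (i - 1)) * Q.eval (r k2) := by
        rw [hpow] at hs2
        nlinarith [hs2]
      have hprod := sign_trans hs1 hpos2
      have hprod' : Q.eval (r k2) * Q.eval (r k1) < 0 := by rw [mul_comm]; exact hprod
      obtain ⟨x, hx1, hx2, hx3⟩ := exists_root_between Q hlt hprod'
      refine ⟨x, fun k hk => ?_, fun k hk => ?_, hx3⟩
      · have : r k1 ≤ r k := hr.antitone (Fin.le_def.mpr (show (k:ℕ) ≤ i - 1 by omega))
        linarith
      · have : r k ≤ r k2 := hr.antitone (Fin.le_def.mpr (show i ≤ (k:ℕ) by omega))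
        linarith
  choose s hs1 hs2 hs3 using fun i : Fin (j + 1) => hexists i.val (Nat.lt_succ_iff.mp i.isLt)
  have hanti : StrictAnti s := by
    rw [Fin.strictAnti_iff_succ_lt]
    intro i
    have h1 : s i.succ < r i := hs1 i.succ i (by simp)
    have h2 : r i < s (Fin.castSucc i) := hs2 (Fin.castSucc i) i (by simp)
    linarith
  refine ⟨s, hanti, roots_of_points Q hQ0 hdeg s hanti hs3, ?_⟩
  intro i
  have hp := prod_sign (Nat.lt_succ_iff.mp i.isLt) r (s i) (hs1 i) (hs2 i)
  rw [hfac (s i)]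
  calc (0:ℝ) < (Q.leadingCoeff * (derivative Q).leadingCoeff)
        * ((∏ k, (s i - r k)) * (-1 : ℝ) ^ (i : ℕ)) := mul_pos hLL' hp
    _ = (derivative Q).leadingCoeff * (∏ k, (s i - r k)) * Q.leadingCoeff
        * (-1 : ℝ) ^ (i : ℕ) := by ring

private lemma natDegree_iter_deriv (P : ℝ[X]) (k : ℕ) (h : k ≤ P.natDegree) :
    (derivative^[k] P).natDegree = P.natDegree - k := by
  induction k with
  | zero => simp
  | succ m ih =>
    have ihm := ih (by omega)
    rw [Function.iterate_succ_apply']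
    have h1 : 0 < (derivative^[m] P).natDegree := by omega
    have h2 := degree_derivative_eq _ h1
    have h3 := natDegree_eq_of_degree_eq_some h2
    omega

theorem wronskian_all_levels (n : ℕ) (hn : 2 ≤ n) (P : ℝ[X]) (hdeg : P.natDegree = n)
    (hW : ∀ j ∈ Finset.Icc 1 (n - 1), ∀ x : ℝ,
      ((derivative (derivative^[n - j - 1] P)).eval x) * ((derivative^[n - j] P).eval x) -
        ((derivative (derivative^[n - j] P)).eval x) * ((derivative^[n - j - 1] P).eval x) > 0) :
    P.roots.card = n ∧ P.roots.Nodup := by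
  have key : ∀ j : ℕ, 1 ≤ j → j ≤ n → Good (derivative^[n - j] P) j := by
    intro j
    induction j with
    | zero => omega
    | succ m ih =>
      intro _ hmn
      rcases Nat.eq_zero_or_pos m with rfl | hm
      · exact good_base _ (by rw [natDegree_iter_deriv P (n - 1) (by omega), hdeg]; omega)
      · have ihm := ih hm (by omega)
        have hidx : n - m - 1 = n - (m + 1) := by omega
        have hQd : derivative (derivative^[n - (m + 1)] P) = derivative^[n - m] P := by
          rw [show n - m = (n - (m + 1)) + 1 from by omega, Function.iterate_succ_apply']
        apply good_step _ m hm
        · rw [natDegree_iter_deriv P (n - (m + 1)) (by omega), hdeg]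
          omega
        · intro x
          have h := hW m (Finset.mem_Icc.mpr ⟨hm, by omega⟩) x
          rw [hidx, hQd] at h
          rw [hQd]
          exact h
        · rw [hQd]
          exact ihm
  have hfin := key n (by omega) le_rfl
  rw [Nat.sub_self, Function.iterate_zero_apply] at hfin
  obtain ⟨r, hr, hroots, -⟩ := hfin
  constructor
  · rw [hroots, Multiset.coe_card, List.length_ofFn]
  · rw [hroots, Multiset.coe_nodup]
    exact List.nodup_ofFn.mpr hr.injective
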